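/- arXiv:1303.5936 — 5 statements merged into one kernel-verified Lean document; each statement's English description precedes it below -/
import Mathlib

section
/- For natural numbers n, m, p with m ≤ n, the alternating sum ∑_{k=0}^{m} (-1)^k · C(p, k) · C(n-k, m-k) equals C(n-p, m), where for negative upper argument the convention C(-a, r) = (-1)^r · C(a+r-1, r) is used (equivalently, the identity holds for the generalized binomial coefficient over the integers). -/
/-- The generalized binomial coefficient `C(k, r)` for an integer upper argument `k`
and natural lower argument `r`, defined by `C(k, r) = ∏_{i=0}^{r-1} (k - i) / r!`. -/
noncomputable def genChoose (k : ℤ) (r : ℕ) : ℚ :=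
  (∏ i ∈ Finset.range r, ((k : ℚ) - i)) / (r.factorial : ℚ)

lemma genChoose_zero_right (k : ℤ) : genChoose k 0 = 1 := by simp [genChoose]

lemma genChoose_zero_succ (r : ℕ) : genChoose 0 (r+1) = 0 := by
  unfold genChoose
  rw [Finset.prod_eq_zero (Finset.mem_range.2 (Nat.succ_pos r)) (by simp)]
  simp

lemma genChoose_pascal (k : ℤ) (r : ℕ) :
    genChoose k (r+1) = genChoose (k-1) (r+1) + genChoose (k-1) r := by
  unfold genChoose
  rw [Finset.prod_range_succ', Finset.prod_range_succ]
  have h1 : (∏ i ∈ Finset.range r, ((k : ℚ) - ↑(i+1)))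
      = ∏ i ∈ Finset.range r, (((k-1 : ℤ) : ℚ) - i) := by
    apply Finset.prod_congr rfl; intro i _; push_cast; ring
  rw [h1]
  have hr : ((r.factorial : ℚ)) ≠ 0 := by exact_mod_cast r.factorial_ne_zero
  have hr1 : (((r+1).factorial : ℚ)) ≠ 0 := by exact_mod_cast (r+1).factorial_ne_zero
  rw [Nat.factorial_succ]
  push_cast
  field_simp
  ring

lemma key (p : ℕ) : ∀ (m : ℕ) (x : ℤ),
    ∑ k ∈ Finset.range (m+1), (-1:ℚ)^k * genChoose (p:ℤ) k * genChoose (x - k) (m-k)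
      = genChoose (x - p) m := by
  induction p with
  | zero =>
    intro m x
    rw [Finset.sum_eq_single 0]
    · simp [genChoose_zero_right]
    · intro k _ hk
      obtain ⟨j, rfl⟩ := Nat.exists_eq_succ_of_ne_zero hk
      simp [genChoose_zero_succ]
    · simp
  | succ p ih =>
    intro m x
    cases m with
    | zero => simp [genChoose_zero_right]
    | succ m =>
      rw [Finset.sum_range_succ']
      have hsplit : ∀ j ∈ Finset.range (m+1),
          (-1:ℚ)^(j+1) * genChoose ((p+1 : ℕ):ℤ) (j+1) * genChoose (x - ↑(j+1)) (m+1-(j+1))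
          = (-1:ℚ)^(j+1) * genChoose (p:ℤ) (j+1) * genChoose (x - ↑(j+1)) (m+1-(j+1))
            + (-1) * ((-1:ℚ)^j * genChoose (p:ℤ) j * genChoose ((x-1) - j) (m-j)) := by
        intro j _
        have hp : ((p+1 : ℕ):ℤ) - 1 = (p:ℤ) := by push_cast; ring
        rw [genChoose_pascal ((p+1 : ℕ):ℤ) j, hp]
        have hx : x - ↑(j+1) = (x-1) - j := by push_cast; ring
        rw [hx, Nat.succ_sub_succ]
        ring
      rw [Finset.sum_congr rfl hsplit, Finset.sum_add_distrib]
      have h0 : (-1:ℚ)^0 * genChoose ((p+1 : ℕ):ℤ) 0 * genChoose (x - (0:ℕ)) (m+1-0)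
          = (-1:ℚ)^0 * genChoose (p:ℤ) 0 * genChoose (x - (0:ℕ)) (m+1-0) := by
        simp [genChoose_zero_right]
      rw [h0]
      have hg : ∑ j ∈ Finset.range (m+1),
            (-1:ℚ)^(j+1) * genChoose (p:ℤ) (j+1) * genChoose (x - ↑(j+1)) (m+1-(j+1))
          + (-1:ℚ)^0 * genChoose (p:ℤ) 0 * genChoose (x - (0:ℕ)) (m+1-0)
          = genChoose (x - p) (m+1) := by
        rw [← ih (m+1) x,
          Finset.sum_range_succ' (fun k => (-1:ℚ)^k * genChoose (p:ℤ) k * genChoose (x - k) (m+1-k)) (m+1)]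
      rw [add_right_comm, hg, ← Finset.mul_sum, ih m (x-1)]
      have hp2 : x - ((p+1 : ℕ):ℤ) = (x - p) - 1 := by push_cast; ring
      have hx2 : (x - 1) - (p:ℤ) = (x - p) - 1 := by ring
      rw [hp2, hx2, genChoose_pascal (x - p) m]
      ring

theorem alternating_binom_sum (n m p : ℕ) (h : m ≤ n) :
    ∑ k ∈ Finset.range (m + 1),
      (-1 : ℚ) ^ k * genChoose (p : ℤ) k * genChoose ((n : ℤ) - k) (m - k)
      = genChoose ((n : ℤ) - p) m :=
  key p m n
end

section
/- For integers n ≥ 1 and 0 ≤ i ≤ n/2, the Weyl dimension formula value for the U(n)-representation with highest weight (1,…,1 (i times), 0,…,0, −1,…,−1 (i times)) equals ((n−2i+1)/(n+1)) · C(n+1, i)², i.e. ∏_{1≤k<j≤n} (λ_k − λ_j + j − k)/(j − k) = ((n−2i+1)/(n+1)) · C(n+1, i)² where λ = (1^i, 0^{n−2i}, (−1)^i). -/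
lemma factQ_ne (a : ℕ) : ((a.factorial : ℚ)) ≠ 0 := by
  exact_mod_cast a.factorial_pos.ne'

lemma ascQ (a t : ℕ) : ∏ k ∈ Finset.range t, ((a:ℚ) + k + 1) = (a+t).factorial / a.factorial := by
  induction t with
  | zero => simp [div_self (factQ_ne a)]
  | succ t ih =>
    rw [Finset.prod_range_succ, ih]
    rw [show a + (t+1) = (a+t)+1 by ring, Nat.factorial_succ]
    push_cast
    field_simp

lemma descQ (a t : ℕ) : ∏ k ∈ Finset.range t, ((a:ℚ) + t - k) = (a+t).factorial / a.factorial := by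
  induction t generalizing a with
  | zero => simp [div_self (factQ_ne a)]
  | succ t ih =>
    rw [Finset.prod_range_succ]
    have h1 : ∏ x ∈ Finset.range t, ((a:ℚ) + ((t+1:ℕ):ℚ) - x)
        = ∏ x ∈ Finset.range t, (((a+1:ℕ):ℚ) + t - x) :=
      Finset.prod_congr rfl (fun k _ => by push_cast; ring)
    rw [h1, ih (a+1)]
    rw [show a + (t+1) = ((a+1)+t) by ring]
    rw [show (a+1)+t = (a+t)+1 by ring, Nat.factorial_succ]
    have h2 : (a+1).factorial = (a+1) * a.factorial := Nat.factorial_succ a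
    rw [h2]
    push_cast
    field_simp
    ring

theorem weyl_dim_one_hook (n i : ℕ) (hn : 1 ≤ n) (hi : 2 * i ≤ n) :
    let lam : ℕ → ℤ := fun k => if k < i then 1 else if k < n - i then 0 else -1
    (∏ j ∈ Finset.range n, ∏ k ∈ Finset.range j,
        (((lam k - lam j : ℤ) : ℚ) + (j : ℚ) - (k : ℚ)) / ((j : ℚ) - (k : ℚ)))
      = (((n : ℚ) - 2 * i + 1) / ((n : ℚ) + 1)) * ((n + 1).choose i : ℚ) ^ 2 := by
  intro lam
  obtain ⟨m, rfl⟩ : ∃ m, n = i + (m + i) := ⟨n - 2*i, by omega⟩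
  have hl1 : ∀ k, k < i → lam k = 1 := by
    intro k hk; simp only [lam]; rw [if_pos hk]
  have hl0 : ∀ k, i ≤ k → k < m + i → lam k = 0 := by
    intro k h1 h2; simp only [lam]; rw [if_neg (by omega), if_pos (by omega)]
  have hlm : ∀ k, m + i ≤ k → lam k = -1 := by
    intro k h1; simp only [lam]; rw [if_neg (by omega), if_neg (by omega)]
  set F : ℕ → ℕ → ℚ := fun j k =>
    (((lam k - lam j : ℤ) : ℚ) + (j : ℚ) - (k : ℚ)) / ((j : ℚ) - (k : ℚ)) with hF
  show (∏ j ∈ Finset.range (i+(m+i)), ∏ k ∈ Finset.range j, F j k) = _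
  have hF1 : ∀ j k : ℕ, k < j → lam k = lam j → F j k = 1 := by
    intro j k hk he
    have hne : (j:ℚ) - k ≠ 0 := by
      have : (k:ℚ) < j := by exact_mod_cast hk
      linarith
    simp only [hF, he]
    rw [sub_self]
    push_cast
    rw [zero_add]
    exact div_self hne
  have hA : (∏ j ∈ Finset.range i, ∏ k ∈ Finset.range j, F j k) = 1 := by
    apply Finset.prod_eq_one
    intro j hj
    simp only [Finset.mem_range] at hj
    apply Finset.prod_eq_one
    intro k hk
    simp only [Finset.mem_range] at hk
    exact hF1 j k hk (by rw [hl1 k (by omega), hl1 j hj])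
  have hB : ∀ t, t < m → (∏ k ∈ Finset.range (i + t), F (i + t) k)
      = ((i:ℚ)+t+1)/((t:ℚ)+1) := by
    intro t ht
    rw [Finset.prod_range_add]
    have h2 : (∏ s ∈ Finset.range t, F (i+t) (i+s)) = 1 := by
      apply Finset.prod_eq_one
      intro s hs
      simp only [Finset.mem_range] at hs
      exact hF1 _ _ (by omega)
        (by rw [hl0 (i+s) (by omega) (by omega), hl0 (i+t) (by omega) (by omega)])
    rw [h2, mul_one]
    have h1 : (∏ k ∈ Finset.range i, F (i+t) k)
        = ∏ k ∈ Finset.range i, ((((t+1:ℕ)):ℚ) + i - k)/(((t:ℕ):ℚ) + i - k) := by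
      apply Finset.prod_congr rfl
      intro k hk
      simp only [Finset.mem_range] at hk
      simp only [hF]
      rw [hl1 k hk, hl0 (i+t) (by omega) (by omega)]
      push_cast
      ring
    rw [h1, Finset.prod_div_distrib, descQ (t+1) i, descQ t i]
    rw [show t+1+i = (t+i)+1 by ring, Nat.factorial_succ ((t+i)), Nat.factorial_succ t]
    have := factQ_ne (t+i)
    have := factQ_ne t
    push_cast
    field_simp
    ring
  have hC : ∀ t, t < i → (∏ k ∈ Finset.range (i + (m + t)), F (i + (m + t)) k)
      = (((i:ℚ)+m+t+2)*((i:ℚ)+m+t+1))/((((m:ℚ)+t+2))*((t:ℚ)+1)) := by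
    intro t ht
    rw [Finset.prod_range_add, Finset.prod_range_add]
    have h3 : (∏ u ∈ Finset.range t, F (i+(m+t)) (i+(m+u))) = 1 := by
      apply Finset.prod_eq_one
      intro u hu
      simp only [Finset.mem_range] at hu
      exact hF1 _ _ (by omega)
        (by rw [hlm (i+(m+u)) (by omega), hlm (i+(m+t)) (by omega)])
    rw [h3, mul_one]
    have h1 : (∏ k ∈ Finset.range i, F (i+(m+t)) k)
        = ∏ k ∈ Finset.range i, ((((m+t+2:ℕ)):ℚ) + i - k)/((((m+t:ℕ)):ℚ) + i - k) := by
      apply Finset.prod_congr rfl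
      intro k hk
      simp only [Finset.mem_range] at hk
      simp only [hF]
      rw [hl1 k hk, hlm (i+(m+t)) (by omega)]
      push_cast
      ring
    have h2 : (∏ s ∈ Finset.range m, F (i+(m+t)) (i+s))
        = ∏ s ∈ Finset.range m, ((((t+1:ℕ)):ℚ) + m - s)/((((t:ℕ)):ℚ) + m - s) := by
      apply Finset.prod_congr rfl
      intro s hs
      simp only [Finset.mem_range] at hs
      simp only [hF]
      rw [hl0 (i+s) (by omega) (by omega), hlm (i+(m+t)) (by omega)]
      push_cast
      ring
    rw [h1, h2, Finset.prod_div_distrib, Finset.prod_div_distrib,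
        descQ (m+t+2) i, descQ (m+t) i, descQ (t+1) m, descQ t m]
    rw [show m+t+2+i = ((m+t+i)+1)+1 by ring, Nat.factorial_succ ((m+t+i)+1),
        Nat.factorial_succ (m+t+i),
        show m+t+2 = ((m+t)+1)+1 by ring, Nat.factorial_succ ((m+t)+1),
        Nat.factorial_succ (m+t),
        show t+1+m = (t+m)+1 by ring, Nat.factorial_succ (t+m),
        Nat.factorial_succ t]
    have := factQ_ne (m+t+i)
    have := factQ_ne (m+t)
    have := factQ_ne (t+m)
    have := factQ_ne t
    push_cast
    field_simp
    ring
  rw [Finset.prod_range_add, Finset.prod_range_add, hA, one_mul]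
  have hPB : (∏ x ∈ Finset.range m, ∏ k ∈ Finset.range (i+x), F (i+x) k)
      = ((i+m).factorial : ℚ) / ((i.factorial : ℚ) * (m.factorial : ℚ)) := by
    calc (∏ x ∈ Finset.range m, ∏ k ∈ Finset.range (i+x), F (i+x) k)
        = ∏ t ∈ Finset.range m, (((i:ℚ)+t+1)/((t:ℚ)+1)) :=
          Finset.prod_congr rfl (fun t ht => hB t (Finset.mem_range.mp ht))
      _ = _ := by
          rw [Finset.prod_div_distrib, ascQ i m]
          have h0 : ∏ t ∈ Finset.range m, ((t:ℚ)+1)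
              = ∏ t ∈ Finset.range m, (((0:ℕ):ℚ)+t+1) :=
            Finset.prod_congr rfl (fun t _ => by push_cast; ring)
          rw [h0, ascQ 0 m]
          simp only [Nat.zero_add, Nat.factorial_zero, Nat.cast_one, div_one]
          rw [div_div]
  have hPC : (∏ x ∈ Finset.range i, ∏ k ∈ Finset.range (i+(m+x)), F (i+(m+x)) k)
      = (((2*i+m+1).factorial : ℚ) * ((2*i+m).factorial : ℚ) * ((m+1).factorial : ℚ))
        / (((i+m+1).factorial : ℚ) * ((i+m).factorial : ℚ) * ((i+m+1).factorial : ℚ)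
            * (i.factorial : ℚ)) := by
    calc (∏ x ∈ Finset.range i, ∏ k ∈ Finset.range (i+(m+x)), F (i+(m+x)) k)
        = ∏ t ∈ Finset.range i,
            ((((i:ℚ)+m+t+2)*((i:ℚ)+m+t+1))/((((m:ℚ)+t+2))*((t:ℚ)+1))) :=
          Finset.prod_congr rfl (fun t ht => hC t (Finset.mem_range.mp ht))
      _ = _ := by
          rw [Finset.prod_div_distrib, Finset.prod_mul_distrib, Finset.prod_mul_distrib]
          have e1 : ∏ t ∈ Finset.range i, ((i:ℚ)+m+t+2)
              = ∏ t ∈ Finset.range i, (((i+m+1:ℕ):ℚ)+t+1) :=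
            Finset.prod_congr rfl (fun t _ => by push_cast; ring)
          have e2 : ∏ t ∈ Finset.range i, ((i:ℚ)+m+t+1)
              = ∏ t ∈ Finset.range i, (((i+m:ℕ):ℚ)+t+1) :=
            Finset.prod_congr rfl (fun t _ => by push_cast; ring)
          have e3 : ∏ t ∈ Finset.range i, ((m:ℚ)+t+2)
              = ∏ t ∈ Finset.range i, (((m+1:ℕ):ℚ)+t+1) :=
            Finset.prod_congr rfl (fun t _ => by push_cast; ring)
          have e4 : ∏ t ∈ Finset.range i, ((t:ℚ)+1)
              = ∏ t ∈ Finset.range i, (((0:ℕ):ℚ)+t+1) :=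
            Finset.prod_congr rfl (fun t _ => by push_cast; ring)
          rw [e1, e2, e3, e4, ascQ (i+m+1) i, ascQ (i+m) i, ascQ (m+1) i, ascQ 0 i]
          rw [show i+m+1+i = 2*i+m+1 by ring, show i+m+i = 2*i+m by ring,
              show m+1+i = i+m+1 by ring]
          simp only [Nat.zero_add, Nat.factorial_zero, Nat.cast_one, div_one]
          have := factQ_ne (i+m+1)
          have := factQ_ne (i+m)
          have := factQ_ne (m+1)
          have := factQ_ne i
          field_simp
  rw [hPB, hPC]
  rw [Nat.cast_choose ℚ (show i ≤ i+(m+i)+1 by omega)]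
  rw [show i+(m+i)+1-i = i+m+1 by omega, show i+(m+i)+1 = 2*i+m+1 by ring]
  rw [show 2*i+m+1 = (2*i+m)+1 by ring, Nat.factorial_succ (2*i+m),
      show i+m+1 = (i+m)+1 by ring, Nat.factorial_succ (i+m),
      Nat.factorial_succ m]
  have := factQ_ne (2*i+m)
  have := factQ_ne (i+m)
  have := factQ_ne m
  have := factQ_ne i
  have h1 : ((i:ℚ)+m+1) ≠ 0 := by positivity
  have h2 : ((2*i+m:ℕ):ℚ)+1 ≠ 0 := by positivity
  have h3 : ((m:ℚ)+1) ≠ 0 := by positivity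
  have h4 : ((i:ℚ)+(m+i)+1) ≠ 0 := by positivity
  push_cast
  field_simp
  ring
end

section
/- For integers n ≥ 2 and i ≥ 0, the Weyl dimension formula for U(n) applied to the highest weight (i, 0, …, 0, −i) gives ∏_{1≤k<j≤n} (λ_k − λ_j + j − k)/(j − k) = ((n+2i−1)/(n−1)) · C(n+i−2, i)², where λ = (i, 0^{n−2}, −i). -/
lemma prod_choose (i m : ℕ) :
    ∏ j ∈ Finset.range m, (((i : ℚ) + j + 1) / ((j : ℚ) + 1)) = ((i + m).choose i : ℚ) := by
  induction m with
  | zero => simp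
  | succ m ih =>
    rw [Finset.prod_range_succ, ih]
    have key : (i + (m + 1)).choose i * (m + 1) = (i + m).choose i * (i + m + 1) := by
      have h1 : (i + m).choose i = (i + m).choose m := Nat.choose_symm_add
      have h2 : (i + m + 1) * (i + m).choose m = (i + m + 1).choose (m + 1) * (m + 1) := by
        simpa [Nat.succ_eq_add_one] using Nat.add_one_mul_choose_eq (i + m) m
      have h3 : (i + (m + 1)).choose i = (i + (m + 1)).choose (m + 1) := Nat.choose_symm_add
      rw [h3, h1, show i + (m + 1) = i + m + 1 by ring, ← h2]
      ring
    have hm : ((m : ℚ) + 1) ≠ 0 := by positivity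
    have hkey := congrArg (fun x : ℕ => (x : ℚ)) key
    push_cast at hkey
    field_simp
    linarith [hkey]

theorem weyl_dim_i_zero_negi (n i : ℕ) (hn : 2 ≤ n) :
    let lam : ℕ → ℤ := fun k => if k = 0 then (i : ℤ) else if k = n - 1 then -(i : ℤ) else 0
    (∏ j ∈ Finset.range n, ∏ k ∈ Finset.range j,
        (((lam k - lam j : ℤ) : ℚ) + (j : ℚ) - (k : ℚ)) / ((j : ℚ) - (k : ℚ)))
      = (((n : ℚ) + 2 * i - 1) / ((n : ℚ) - 1)) * ((n + i - 2).choose i : ℚ) ^ 2 := by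
  intro lam
  obtain ⟨m, rfl⟩ : ∃ m, n = m + 2 := ⟨n - 2, by omega⟩
  have hlam0 : lam 0 = (i : ℤ) := by simp [lam]
  have hlamtop : lam (m + 1) = -(i : ℤ) := by simp [lam]
  have hlammid : ∀ k, k ≠ 0 → k ≠ m + 1 → lam k = 0 := by
    intro k h1 h2
    simp only [lam, if_neg h1, show m + 2 - 1 = m + 1 from rfl, if_neg h2]
  -- inner product for middle rows
  have hmid : ∀ j ∈ Finset.range m,
      (∏ k ∈ Finset.range (j + 1),
        (((lam k - lam (j + 1) : ℤ) : ℚ) + ((j + 1 : ℕ) : ℚ) - (k : ℚ)) / (((j + 1 : ℕ) : ℚ) - (k : ℚ)))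
      = ((i : ℚ) + j + 1) / ((j : ℚ) + 1) := by
    intro j hj
    rw [Finset.mem_range] at hj
    have hlj : lam (j + 1) = 0 := hlammid (j + 1) (by omega) (by omega)
    rw [Finset.prod_range_succ']
    have h1 : ∀ k ∈ Finset.range j,
        (((lam (k + 1) - lam (j + 1) : ℤ) : ℚ) + ((j + 1 : ℕ) : ℚ) - ((k + 1 : ℕ) : ℚ)) /
          (((j + 1 : ℕ) : ℚ) - ((k + 1 : ℕ) : ℚ)) = 1 := by
      intro k hk
      rw [Finset.mem_range] at hk
      have hlk : lam (k + 1) = 0 := hlammid (k + 1) (by omega) (by omega)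
      have hne : (j : ℚ) - k ≠ 0 :=
        sub_ne_zero.mpr (by exact_mod_cast (by omega : j ≠ k))
      rw [hlk, hlj]
      push_cast
      rw [show (0 : ℚ) + ((j : ℚ) + 1) - ((k : ℚ) + 1) = (j : ℚ) - k by ring,
        show ((j : ℚ) + 1) - ((k : ℚ) + 1) = (j : ℚ) - k by ring, div_self hne]
    rw [Finset.prod_congr rfl h1, Finset.prod_const_one, one_mul, hlam0, hlj]
    push_cast
    ring_nf
  -- the top row j = m + 1
  have htop :
      (∏ k ∈ Finset.range (m + 1),
        (((lam k - lam (m + 1) : ℤ) : ℚ) + ((m + 1 : ℕ) : ℚ) - (k : ℚ)) / (((m + 1 : ℕ) : ℚ) - (k : ℚ)))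
      = (∏ j ∈ Finset.range m, (((i : ℚ) + j + 1) / ((j : ℚ) + 1))) *
          ((2 * (i : ℚ) + m + 1) / ((m : ℚ) + 1)) := by
    rw [Finset.prod_range_succ']
    have h1 : ∀ k ∈ Finset.range m,
        (((lam (k + 1) - lam (m + 1) : ℤ) : ℚ) + ((m + 1 : ℕ) : ℚ) - ((k + 1 : ℕ) : ℚ)) /
          (((m + 1 : ℕ) : ℚ) - ((k + 1 : ℕ) : ℚ))
        = ((i : ℚ) + ((m - 1 - k : ℕ) : ℚ) + 1) / (((m - 1 - k : ℕ) : ℚ) + 1) := by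
      intro k hk
      rw [Finset.mem_range] at hk
      have hlk : lam (k + 1) = 0 := hlammid (k + 1) (by omega) (by omega)
      have hmk : ((m - 1 - k : ℕ) : ℚ) = (m : ℚ) - 1 - k := by
        rw [Nat.cast_sub (by omega : k ≤ m - 1), Nat.cast_sub (by omega : 1 ≤ m)]
        push_cast
        ring
      rw [hlk, hlamtop, hmk]
      push_cast
      ring_nf
    rw [Finset.prod_congr rfl h1]
    have hre : ∏ k ∈ Finset.range m, (((i : ℚ) + ((m - 1 - k : ℕ) : ℚ) + 1) / (((m - 1 - k : ℕ) : ℚ) + 1))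
        = ∏ j ∈ Finset.range m, (((i : ℚ) + j + 1) / ((j : ℚ) + 1)) := by
      rw [← Finset.prod_range_reflect]
      apply Finset.prod_congr rfl
      intro k hk
      rw [Finset.mem_range] at hk
      congr 3 <;> · congr 1; omega
    rw [hre, hlam0, hlamtop]
    push_cast
    ring
  rw [Finset.prod_range_succ, Finset.prod_range_succ', htop, Finset.prod_congr rfl hmid,
    Finset.prod_range_zero, prod_choose, show m + 2 + i - 2 = i + m by omega]
  have hm : ((m : ℚ) + 1) ≠ 0 := by positivity
  push_cast
  rw [show ((m : ℚ) + 2 - 1) = (m : ℚ) + 1 by ring]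
  field_simp
  ring
end

section
/- For integers n and 2 ≤ i with 2i ≤ n, the Weyl dimension formula for U(n) applied to λ = (2, 1^{i−1}, 0^{n−2i}, (−1)^{i−1}, −2) yields ∏_{1≤k<j≤n}(λ_k − λ_j + j − k)/(j − k) = i²(n+3)(n−2i+1)/(n−i+2)² · C(n+1, i+1)². -/
open Finset

def Wf (x : ℕ) : ℚ := (Nat.factorial x : ℚ)

def Wphi (x d : ℕ) : ℚ := ∏ u ∈ range d, ((x : ℚ) + u)

lemma Wf_ne (x : ℕ) : Wf x ≠ 0 := by
  simp [Wf, Nat.factorial_ne_zero]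

lemma Wphi_pos (x d : ℕ) (hx : 1 ≤ x) : 0 < Wphi x d := by
  apply Finset.prod_pos
  intro u _
  have : (1:ℚ) ≤ (x:ℚ) := by exact_mod_cast hx
  positivity

lemma Wphi_succ_mul (x d : ℕ) : (x:ℚ) * Wphi (x+1) d = Wphi x d * ((x:ℚ)+d) := by
  induction d with
  | zero => simp [Wphi]
  | succ d ih =>
    simp only [Wphi, Finset.prod_range_succ] at *
    push_cast
    push_cast at ih
    nlinarith [ih]

lemma Wf_phi (x d : ℕ) : Wf x * Wphi (x+1) d = Wf (x+d) := by
  induction d with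
  | zero => simp [Wphi]
  | succ d ih =>
    simp only [Wphi, Finset.prod_range_succ, ← mul_assoc] at *
    rw [ih]
    have : Wf (x + (d+1)) = ((x + d + 1 : ℕ) : ℚ) * Wf (x + d) := by
      show ((Nat.factorial (x + d + 1) : ℕ) : ℚ) = _
      rw [Nat.factorial_succ]
      push_cast [Wf]
      ring
    rw [this]
    push_cast
    ring

lemma Wswap (x sz d : ℕ) : ∏ a ∈ range sz, Wphi (x+a) d = ∏ u ∈ range d, Wphi (x+u) sz := by
  simp only [Wphi]
  rw [Finset.prod_comm]
  apply Finset.prod_congr rfl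
  intro u _
  apply Finset.prod_congr rfl
  intro a _
  push_cast
  ring

lemma Wcore (e d sz : ℕ) : ∀ t : ℕ,
    (∏ b ∈ range t, ∏ a ∈ range sz, (((e:ℚ)+1+d+a+b)/((e:ℚ)+1+a+b)))
      * ∏ a ∈ range sz, Wphi (e+1+a) d
    = ∏ a ∈ range sz, Wphi (e+1+a+t) d := by
  intro t
  induction t with
  | zero => simp
  | succ t ih =>
    rw [Finset.prod_range_succ, mul_comm (∏ b ∈ range t, _), mul_assoc, ih,
      ← Finset.prod_mul_distrib]
    apply Finset.prod_congr rfl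
    intro a _
    have hpos : (0:ℚ) < (e:ℚ)+1+a+t := by positivity
    have key := Wphi_succ_mul (e+1+a+t) d
    push_cast at key ⊢
    have h1 : e + 1 + a + (t+1) = (e+1+a+t) + 1 := by ring
    rw [h1]
    field_simp
    nlinarith [key]

lemma Wcore' (e d sz t : ℕ) :
    (∏ b ∈ range t, ∏ a ∈ range sz, (((e:ℚ)+1+d+a+b)/((e:ℚ)+1+a+b)))
    = ∏ u ∈ range d, (Wf (e+u+t+sz) * Wf (e+u)) / (Wf (e+u+sz) * Wf (e+u+t)) := by
  have h0 : ∀ a, (0:ℚ) < Wphi (e+1+a) d := fun a => Wphi_pos _ _ (by omega)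
  have hne : (∏ a ∈ range sz, Wphi (e+1+a) d) ≠ 0 := by
    apply ne_of_gt; exact Finset.prod_pos (fun a _ => h0 a)
  have hmain : (∏ b ∈ range t, ∏ a ∈ range sz, (((e:ℚ)+1+d+a+b)/((e:ℚ)+1+a+b)))
      = (∏ a ∈ range sz, Wphi (e+1+a+t) d) / (∏ a ∈ range sz, Wphi (e+1+a) d) := by
    rw [eq_div_iff hne]; exact Wcore e d sz t
  rw [hmain]
  have l1 : ∏ a ∈ range sz, Wphi (e+1+a+t) d = ∏ u ∈ range d, Wphi (e+t+1+u) sz := by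
    have := Wswap (e+t+1) sz d
    rw [← this]
    apply Finset.prod_congr rfl; intro a _; congr 1; omega
  have l2 : ∏ a ∈ range sz, Wphi (e+1+a) d = ∏ u ∈ range d, Wphi (e+1+u) sz := Wswap (e+1) sz d
  rw [l1, l2, ← Finset.prod_div_distrib]
  apply Finset.prod_congr rfl
  intro u _
  have k1 : Wf (e+t+u) * Wphi (e+t+u+1) sz = Wf (e+t+u+sz) := Wf_phi (e+t+u) sz
  have k2 : Wf (e+u) * Wphi (e+u+1) sz = Wf (e+u+sz) := Wf_phi (e+u) sz
  have e1 : e+t+1+u = e+t+u+1 := by omega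
  have e2 : e+1+u = e+u+1 := by omega
  have e3 : e+u+t+sz = e+t+u+sz := by omega
  have e4 : e+u+t = e+t+u := by omega
  rw [e1, e2, e3, e4]
  have n1 := Wf_ne (e+t+u)
  have n2 := Wf_ne (e+u)
  have q1 : Wphi (e+t+u+1) sz = Wf (e+t+u+sz) / Wf (e+t+u) := by
    rw [eq_div_iff n1]; linear_combination k1
  have q2 : Wphi (e+u+1) sz = Wf (e+u+sz) / Wf (e+u) := by
    rw [eq_div_iff n2]; linear_combination k2
  rw [q1, q2]
  have n3 := Wf_ne (e+u+sz)
  have n4 := Wf_ne (e+t+u+sz)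
  field_simp

lemma Wrect (p sz e t d : ℕ) :
    (∏ j ∈ Ico (p+sz+e) (p+sz+e+t), ∏ k ∈ Ico p (p+sz),
      (((d:ℚ) + (j:ℚ) - (k:ℚ))/((j:ℚ) - (k:ℚ))))
    = ∏ u ∈ range d, (Wf (e+u+t+sz) * Wf (e+u)) / (Wf (e+u+sz) * Wf (e+u+t)) := by
  rw [Finset.prod_Ico_eq_prod_range]
  have h1 : p+sz+e+t - (p+sz+e) = t := by omega
  rw [h1]
  refine Eq.trans ?_ (Wcore' e d sz t)
  apply Finset.prod_congr rfl
  intro b _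
  rw [Finset.prod_Ico_eq_prod_range]
  have h2 : p+sz - p = sz := by omega
  rw [h2]
  rw [← Finset.prod_range_reflect]
  apply Finset.prod_congr rfl
  intro a ha
  rw [Finset.mem_range] at ha
  obtain ⟨c, hc⟩ : ∃ c, sz - 1 - a = c := ⟨_, rfl⟩
  have hsz : sz = a + c + 1 := by omega
  rw [hc, hsz]
  congr 1 <;> push_cast <;> ring

def Wt (e t sz d : ℕ) : ℚ :=
  ∏ u ∈ range d, (Wf (e+u+t+sz) * Wf (e+u)) / (Wf (e+u+sz) * Wf (e+u+t))

lemma Wrect' (P Q R S : ℕ) (sz e t d : ℕ) (h1 : Q = P + sz) (h2 : R = Q + e) (h3 : S = R + t) :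
    (∏ j ∈ Ico R S, ∏ k ∈ Ico P Q,
      (((d:ℚ) + (j:ℚ) - (k:ℚ))/((j:ℚ) - (k:ℚ)))) = Wt e t sz d := by
  subst h1 h2 h3
  rw [show P + sz + e + t = P + sz + e + t from rfl]
  exact Wrect P sz e t d

def lamf (s m : ℕ) : ℕ → ℤ := fun k =>
  if k = 0 then 2 else if k < s+2 then 1 else if k < s+2+m then 0
  else if k < 2*s+3+m then -1 else -2

lemma lamf_val0 (s m k : ℕ) (h : k = 0) : lamf s m k = 2 := by simp [lamf, h]
lemma lamf_val1 (s m k : ℕ) (h1 : 1 ≤ k) (h2 : k < s+2) : lamf s m k = 1 := by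
  unfold lamf; rw [if_neg (by omega), if_pos h2]
lemma lamf_val2 (s m k : ℕ) (h1 : s+2 ≤ k) (h2 : k < s+2+m) : lamf s m k = 0 := by
  unfold lamf; rw [if_neg (by omega), if_neg (by omega), if_pos h2]
lemma lamf_val3 (s m k : ℕ) (h1 : s+2+m ≤ k) (h2 : k < 2*s+3+m) : lamf s m k = -1 := by
  unfold lamf; rw [if_neg (by omega), if_neg (by omega), if_neg (by omega), if_pos h2]
lemma lamf_val4 (s m k : ℕ) (h1 : 2*s+3+m ≤ k) : lamf s m k = -2 := by
  unfold lamf; rw [if_neg (by omega), if_neg (by omega), if_neg (by omega), if_neg (by omega)]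

def Wfac (s m : ℕ) (j k : ℕ) : ℚ :=
  (((lamf s m k - lamf s m j : ℤ) : ℚ) + (j:ℚ) - (k:ℚ)) / ((j:ℚ) - (k:ℚ))

lemma Wone (s m A j : ℕ) (hAj : A ≤ j)
    (hsame : ∀ k, A ≤ k → k < j → lamf s m k = lamf s m j) :
    ∏ k ∈ Ico A j, Wfac s m j k = 1 := by
  apply Finset.prod_eq_one
  intro k hk
  rw [Finset.mem_Ico] at hk
  unfold Wfac
  rw [hsame k hk.1 hk.2]
  have hkj : (k:ℚ) < j := by exact_mod_cast hk.2
  have hne : (j:ℚ) - k ≠ 0 := sub_ne_zero.mpr (ne_of_gt hkj)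
  rw [sub_self, Int.cast_zero, zero_add, div_self hne]

lemma Wconv (s m P Q R S : ℕ) (d : ℕ)
    (hd : ∀ j k, k ∈ Ico P Q → j ∈ Ico R S → (lamf s m k - lamf s m j : ℤ) = (d:ℤ)) :
    ∏ j ∈ Ico R S, ∏ k ∈ Ico P Q, Wfac s m j k
    = ∏ j ∈ Ico R S, ∏ k ∈ Ico P Q, (((d:ℚ) + (j:ℚ) - (k:ℚ))/((j:ℚ) - (k:ℚ))) := by
  refine Finset.prod_congr rfl fun j hj => Finset.prod_congr rfl fun k hk => ?_
  unfold Wfac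
  rw [hd j k hk hj]
  norm_cast

lemma Wpiece (s m P Q R S sz e t d : ℕ) (h1 : Q = P + sz) (h2 : R = Q + e) (h3 : S = R + t)
    (hd : ∀ j k, k ∈ Ico P Q → j ∈ Ico R S → (lamf s m k - lamf s m j : ℤ) = (d:ℤ)) :
    ∏ j ∈ Ico R S, ∏ k ∈ Ico P Q, Wfac s m j k = Wt e t sz d := by
  rw [Wconv s m P Q R S d hd]
  exact Wrect' P Q R S sz e t d h1 h2 h3

lemma Wmain (s m : ℕ) :
    (∏ j ∈ range (2*s+4+m), ∏ k ∈ range j, Wfac s m j k)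
    = Wt 0 (s+1) 1 1
      * (Wt (s+1) m 1 2 * Wt 0 m (s+1) 1)
      * (Wt (s+1+m) (s+1) 1 3 * Wt m (s+1) (s+1) 2 * Wt 0 (s+1) m 1)
      * (Wt (2*s+2+m) 1 1 4 * Wt (s+1+m) 1 (s+1) 3 * Wt (s+1) 1 m 2 * Wt 0 1 (s+1) 1) := by
  have hsplit : ∏ j ∈ range (2*s+4+m), ∏ k ∈ range j, Wfac s m j k
      = (∏ j ∈ Ico 0 1, ∏ k ∈ range j, Wfac s m j k)
        * (∏ j ∈ Ico 1 (s+2), ∏ k ∈ range j, Wfac s m j k)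
        * (∏ j ∈ Ico (s+2) (s+2+m), ∏ k ∈ range j, Wfac s m j k)
        * (∏ j ∈ Ico (s+2+m) (2*s+3+m), ∏ k ∈ range j, Wfac s m j k)
        * (∏ j ∈ Ico (2*s+3+m) (2*s+4+m), ∏ k ∈ range j, Wfac s m j k) := by
    rw [Finset.range_eq_Ico,
      ← Finset.prod_Ico_consecutive _ (by omega : (0:ℕ) ≤ 2*s+3+m) (by omega : 2*s+3+m ≤ 2*s+4+m),
      ← Finset.prod_Ico_consecutive _ (by omega : (0:ℕ) ≤ s+2+m) (by omega : s+2+m ≤ 2*s+3+m),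
      ← Finset.prod_Ico_consecutive _ (by omega : (0:ℕ) ≤ s+2) (by omega : s+2 ≤ s+2+m),
      ← Finset.prod_Ico_consecutive _ (by omega : (0:ℕ) ≤ 1) (by omega : 1 ≤ s+2)]
  rw [hsplit]
  have p0 : ∏ j ∈ Ico 0 1, ∏ k ∈ range j, Wfac s m j k = 1 := by
    simp
  have p1 : ∏ j ∈ Ico 1 (s+2), ∏ k ∈ range j, Wfac s m j k = Wt 0 (s+1) 1 1 := by
    have step : ∀ j ∈ Ico 1 (s+2), ∏ k ∈ range j, Wfac s m j k = ∏ k ∈ Ico 0 1, Wfac s m j k := by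
      intro j hj
      rw [Finset.mem_Ico] at hj
      rw [Finset.range_eq_Ico,
        ← Finset.prod_Ico_consecutive _ (by omega : (0:ℕ) ≤ 1) (by omega : 1 ≤ j),
        Wone s m 1 j hj.1 (fun k h1 h2 => by
          rw [lamf_val1 s m k h1 (by omega), lamf_val1 s m j hj.1 hj.2]),
        mul_one]
    rw [Finset.prod_congr rfl step]
    exact Wpiece s m 0 1 1 (s+2) 1 0 (s+1) 1 (by omega) (by omega) (by omega) (by
      intro j k hk hj
      rw [Finset.mem_Ico] at hk hj
      rw [lamf_val0 s m k (by omega), lamf_val1 s m j (by omega) (by omega)]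
      norm_num)
  have p2 : ∏ j ∈ Ico (s+2) (s+2+m), ∏ k ∈ range j, Wfac s m j k
      = Wt (s+1) m 1 2 * Wt 0 m (s+1) 1 := by
    have step : ∀ j ∈ Ico (s+2) (s+2+m), ∏ k ∈ range j, Wfac s m j k
        = (∏ k ∈ Ico 0 1, Wfac s m j k) * ∏ k ∈ Ico 1 (s+2), Wfac s m j k := by
      intro j hj
      rw [Finset.mem_Ico] at hj
      rw [Finset.range_eq_Ico,
        ← Finset.prod_Ico_consecutive _ (by omega : (0:ℕ) ≤ s+2) (by omega : s+2 ≤ j),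
        ← Finset.prod_Ico_consecutive _ (by omega : (0:ℕ) ≤ 1) (by omega : 1 ≤ s+2),
        Wone s m (s+2) j hj.1 (fun k h1 h2 => by
          rw [lamf_val2 s m k h1 (by omega), lamf_val2 s m j hj.1 hj.2]),
        mul_one]
    rw [Finset.prod_congr rfl step, Finset.prod_mul_distrib]
    congr 1
    · exact Wpiece s m 0 1 (s+2) (s+2+m) 1 (s+1) m 2 (by omega) (by omega) (by omega) (by
        intro j k hk hj
        rw [Finset.mem_Ico] at hk hj
        rw [lamf_val0 s m k (by omega), lamf_val2 s m j (by omega) (by omega)]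
        norm_num)
    · exact Wpiece s m 1 (s+2) (s+2) (s+2+m) (s+1) 0 m 1 (by omega) (by omega) (by omega) (by
        intro j k hk hj
        rw [Finset.mem_Ico] at hk hj
        rw [lamf_val1 s m k (by omega) (by omega), lamf_val2 s m j (by omega) (by omega)]
        norm_num)
  have p3 : ∏ j ∈ Ico (s+2+m) (2*s+3+m), ∏ k ∈ range j, Wfac s m j k
      = Wt (s+1+m) (s+1) 1 3 * Wt m (s+1) (s+1) 2 * Wt 0 (s+1) m 1 := by
    have step : ∀ j ∈ Ico (s+2+m) (2*s+3+m), ∏ k ∈ range j, Wfac s m j k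
        = ((∏ k ∈ Ico 0 1, Wfac s m j k) * ∏ k ∈ Ico 1 (s+2), Wfac s m j k)
          * ∏ k ∈ Ico (s+2) (s+2+m), Wfac s m j k := by
      intro j hj
      rw [Finset.mem_Ico] at hj
      rw [Finset.range_eq_Ico,
        ← Finset.prod_Ico_consecutive _ (by omega : (0:ℕ) ≤ s+2+m) (by omega : s+2+m ≤ j),
        ← Finset.prod_Ico_consecutive _ (by omega : (0:ℕ) ≤ s+2) (by omega : s+2 ≤ s+2+m),
        ← Finset.prod_Ico_consecutive _ (by omega : (0:ℕ) ≤ 1) (by omega : 1 ≤ s+2),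
        Wone s m (s+2+m) j hj.1 (fun k h1 h2 => by
          rw [lamf_val3 s m k h1 (by omega), lamf_val3 s m j hj.1 hj.2]),
        mul_one]
    rw [Finset.prod_congr rfl step, Finset.prod_mul_distrib, Finset.prod_mul_distrib]
    congr 1
    congr 1
    · exact Wpiece s m 0 1 (s+2+m) (2*s+3+m) 1 (s+1+m) (s+1) 3 (by omega) (by omega) (by omega) (by
        intro j k hk hj
        rw [Finset.mem_Ico] at hk hj
        rw [lamf_val0 s m k (by omega), lamf_val3 s m j (by omega) (by omega)]
        norm_num)
    · exact Wpiece s m 1 (s+2) (s+2+m) (2*s+3+m) (s+1) m (s+1) 2 (by omega) (by omega) (by omega) (by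
        intro j k hk hj
        rw [Finset.mem_Ico] at hk hj
        rw [lamf_val1 s m k (by omega) (by omega), lamf_val3 s m j (by omega) (by omega)]
        norm_num)
    · exact Wpiece s m (s+2) (s+2+m) (s+2+m) (2*s+3+m) m 0 (s+1) 1 (by omega) (by omega) (by omega) (by
        intro j k hk hj
        rw [Finset.mem_Ico] at hk hj
        rw [lamf_val2 s m k (by omega) (by omega), lamf_val3 s m j (by omega) (by omega)]
        norm_num)
  have p4 : ∏ j ∈ Ico (2*s+3+m) (2*s+4+m), ∏ k ∈ range j, Wfac s m j k
      = Wt (2*s+2+m) 1 1 4 * Wt (s+1+m) 1 (s+1) 3 * Wt (s+1) 1 m 2 * Wt 0 1 (s+1) 1 := by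
    have step : ∀ j ∈ Ico (2*s+3+m) (2*s+4+m), ∏ k ∈ range j, Wfac s m j k
        = (((∏ k ∈ Ico 0 1, Wfac s m j k) * ∏ k ∈ Ico 1 (s+2), Wfac s m j k)
          * ∏ k ∈ Ico (s+2) (s+2+m), Wfac s m j k)
          * ∏ k ∈ Ico (s+2+m) (2*s+3+m), Wfac s m j k := by
      intro j hj
      rw [Finset.mem_Ico] at hj
      rw [Finset.range_eq_Ico,
        ← Finset.prod_Ico_consecutive _ (by omega : (0:ℕ) ≤ 2*s+3+m) (by omega : 2*s+3+m ≤ j),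
        ← Finset.prod_Ico_consecutive _ (by omega : (0:ℕ) ≤ s+2+m) (by omega : s+2+m ≤ 2*s+3+m),
        ← Finset.prod_Ico_consecutive _ (by omega : (0:ℕ) ≤ s+2) (by omega : s+2 ≤ s+2+m),
        ← Finset.prod_Ico_consecutive _ (by omega : (0:ℕ) ≤ 1) (by omega : 1 ≤ s+2),
        Wone s m (2*s+3+m) j hj.1 (fun k h1 h2 => by
          rw [lamf_val4 s m k h1, lamf_val4 s m j hj.1]),
        mul_one]
    rw [Finset.prod_congr rfl step, Finset.prod_mul_distrib, Finset.prod_mul_distrib,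
      Finset.prod_mul_distrib]
    congr 1
    congr 1
    congr 1
    · exact Wpiece s m 0 1 (2*s+3+m) (2*s+4+m) 1 (2*s+2+m) 1 4 (by omega) (by omega) (by omega) (by
        intro j k hk hj
        rw [Finset.mem_Ico] at hk hj
        rw [lamf_val0 s m k (by omega), lamf_val4 s m j (by omega)]
        norm_num)
    · exact Wpiece s m 1 (s+2) (2*s+3+m) (2*s+4+m) (s+1) (s+1+m) 1 3 (by omega) (by omega) (by omega) (by
        intro j k hk hj
        rw [Finset.mem_Ico] at hk hj
        rw [lamf_val1 s m k (by omega) (by omega), lamf_val4 s m j (by omega)]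
        norm_num)
    · exact Wpiece s m (s+2) (s+2+m) (2*s+3+m) (2*s+4+m) m (s+1) 1 2 (by omega) (by omega) (by omega) (by
        intro j k hk hj
        rw [Finset.mem_Ico] at hk hj
        rw [lamf_val2 s m k (by omega) (by omega), lamf_val4 s m j (by omega)]
        norm_num)
    · exact Wpiece s m (s+2+m) (2*s+3+m) (2*s+3+m) (2*s+4+m) (s+1) 0 1 1 (by omega) (by omega) (by omega) (by
        intro j k hk hj
        rw [Finset.mem_Ico] at hk hj
        rw [lamf_val3 s m k (by omega) (by omega), lamf_val4 s m j (by omega)]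
        norm_num)
  rw [p0, p1, p2, p3, p4]
  ring

set_option maxHeartbeats 2000000 in
lemma Wfinal (s m : ℕ) :
    Wt 0 (s+1) 1 1
      * (Wt (s+1) m 1 2 * Wt 0 m (s+1) 1)
      * (Wt (s+1+m) (s+1) 1 3 * Wt m (s+1) (s+1) 2 * Wt 0 (s+1) m 1)
      * (Wt (2*s+2+m) 1 1 4 * Wt (s+1+m) 1 (s+1) 3 * Wt (s+1) 1 m 2 * Wt 0 1 (s+1) 1)
    = ((s:ℚ)+2)^2 * ((m:ℚ)+2*s+7) * ((m:ℚ)+1) / ((m:ℚ)+s+4)^2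
      * ((Nat.choose (m+2*s+5) (s+3) : ℚ))^2 := by
  have h1 : ((Nat.factorial (2+s) : ℕ) : ℚ) = (2+(s:ℚ)) * ((Nat.factorial (1+s) : ℕ) : ℚ) := by
    rw [show 2+s = (1+s)+1 from by omega, Nat.factorial_succ]; push_cast; ring
  have h2 : ((Nat.factorial (4+s+m) : ℕ) : ℚ) = (4+(s:ℚ)+m) * ((Nat.factorial (3+s+m) : ℕ) : ℚ) := by
    rw [show 4+s+m = (3+s+m)+1 from by omega, Nat.factorial_succ]; push_cast; ring
  have h3 : ((Nat.factorial (7+s*2+m) : ℕ) : ℚ) = (7+(s:ℚ)*2+m) * ((Nat.factorial (6+s*2+m) : ℕ) : ℚ) := by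
    rw [show 7+s*2+m = (6+s*2+m)+1 from by omega, Nat.factorial_succ]; push_cast; ring
  have h4 : ((Nat.factorial (1+m) : ℕ) : ℚ) = (1+(m:ℚ)) * ((Nat.factorial m : ℕ) : ℚ) := by
    rw [show 1+m = m+1 from by omega, Nat.factorial_succ]; push_cast; ring
  have hden : ((m:ℚ)+s+4) ≠ 0 := by positivity
  simp only [Wt, Finset.prod_range_succ, Finset.prod_range_zero, one_mul, Wf]
  rw [Nat.cast_choose ℚ (by omega : s+3 ≤ m+2*s+5)]
  rw [show m+2*s+5-(s+3) = 2+s+m from by omega]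
  field_simp [Nat.cast_ne_zero, Nat.factorial_ne_zero]
  ring_nf
  rw [h1, h2, h3, h4]
  ring

theorem weyl_dim_two_one_hook (n i : ℕ) (hi : 2 ≤ i) (hin : 2 * i ≤ n) :
    let lam : ℕ → ℤ := fun k =>
      if k = 0 then 2 else if k < i then 1 else if k < n - i then 0
      else if k < n - 1 then -1 else -2
    (∏ j ∈ Finset.range n, ∏ k ∈ Finset.range j,
        (((lam k - lam j : ℤ) : ℚ) + (j : ℚ) - (k : ℚ)) / ((j : ℚ) - (k : ℚ)))
      = ((i : ℚ) ^ 2 * ((n : ℚ) + 3) * ((n : ℚ) - 2 * i + 1) / (((n : ℚ) - i + 2) ^ 2))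
        * ((n + 1).choose (i + 1) : ℚ) ^ 2 := by
  obtain ⟨s, rfl⟩ : ∃ s, i = s + 2 := ⟨i - 2, by omega⟩
  obtain ⟨m, rfl⟩ : ∃ m, n = 2*(s+2) + m := ⟨n - 2*(s+2), by omega⟩
  intro lam
  have hl : ∀ k, lam k = lamf s m k := by
    intro k
    show (if k = 0 then (2:ℤ) else if k < s+2 then 1 else if k < 2*(s+2)+m - (s+2) then 0
      else if k < 2*(s+2)+m - 1 then -1 else -2) = _
    rw [show 2*(s+2)+m - (s+2) = s+2+m from by omega,
      show 2*(s+2)+m - 1 = 2*s+3+m from by omega]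
    rfl
  have hrange : 2*(s+2)+m = 2*s+4+m := by omega
  rw [hrange]
  have key : (∏ j ∈ range (2*s+4+m), ∏ k ∈ range j,
      (((lam k - lam j : ℤ) : ℚ) + (j:ℚ) - (k:ℚ)) / ((j:ℚ) - (k:ℚ)))
      = ∏ j ∈ range (2*s+4+m), ∏ k ∈ range j, Wfac s m j k := by
    apply Finset.prod_congr rfl
    intro j _
    apply Finset.prod_congr rfl
    intro k _
    rw [hl k, hl j]
    rfl
  rw [key, Wmain, Wfinal]
  rw [show 2*s+4+m+1 = m+2*s+5 from by omega, show s+2+1 = s+3 from rfl]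
  push_cast
  ring
end

section
/- Let f : [0,1]^m → ℝ be f(y) = ∏_{i=1}^m y_i, and suppose X is a nonempty finite set with a symmetric kernel y : X × X → [0,1]^m such that y(a,a) = (1,…,1) for all a. Suppose f can be written as f = c_0 + ∑_{μ ∈ T} c_μ Z_μ where c_0 > 0, each c_μ > 0, each kernel (a,b) ↦ Z_μ(y(a,b)) is positive semidefinite on X, and ∑_{a,b ∈ X} Z_μ(y(a,b)) = 0 for each μ ∈ T. Then |X| ≥ f(1,…,1)/c_0 (linear programming bound for designs). -/
theorem linear_programming_bound {α ι : Type*} (m : ℕ)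
    (X : Finset α) (hX : X.Nonempty)
    (y : α → α → Fin m → ℝ)
    (hrange : ∀ a b, ∀ i, 0 ≤ y a b i ∧ y a b i ≤ 1)
    (hsymm : ∀ a b, y a b = y b a)
    (hdiag : ∀ a ∈ X, y a a = fun _ => 1)
    (T : Finset ι) (Z : ι → (Fin m → ℝ) → ℝ) (c₀ : ℝ) (c : ι → ℝ)
    (hc₀ : 0 < c₀) (hc : ∀ μ ∈ T, 0 < c μ)
    (hF : ∀ v : Fin m → ℝ, (∀ i, 0 ≤ v i ∧ v i ≤ 1) →
      (∏ i, v i) = c₀ + ∑ μ ∈ T, c μ * Z μ v)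
    (hpsd : ∀ μ ∈ T, ∀ w : α → ℝ,
      0 ≤ ∑ a ∈ X, ∑ b ∈ X, w a * w b * Z μ (y a b))
    (hdesign : ∀ μ ∈ T, ∑ a ∈ X, ∑ b ∈ X, Z μ (y a b) = 0) :
    (∏ _i : Fin m, (1 : ℝ)) / c₀ ≤ (X.card : ℝ) := by
  set N : ℝ := (X.card : ℝ)
  have hN : 0 < N := by
    have h := Finset.card_pos.mpr hX
    simp only [N]
    exact_mod_cast h
  -- The double sum S of f(y a b)
  have hS : ∑ a ∈ X, ∑ b ∈ X, ∏ i, y a b i = N ^ 2 * c₀ := by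
    have : ∀ a ∈ X, ∀ b ∈ X,
        (∏ i, y a b i) = c₀ + ∑ μ ∈ T, c μ * Z μ (y a b) := fun a _ b _ =>
      hF (y a b) (hrange a b)
    calc ∑ a ∈ X, ∑ b ∈ X, ∏ i, y a b i
        = ∑ a ∈ X, ∑ b ∈ X, (c₀ + ∑ μ ∈ T, c μ * Z μ (y a b)) := by
          refine Finset.sum_congr rfl fun a ha => Finset.sum_congr rfl fun b hb => ?_
          exact this a ha b hb
      _ = N ^ 2 * c₀ + ∑ μ ∈ T, c μ * (∑ a ∈ X, ∑ b ∈ X, Z μ (y a b)) := by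
          simp only [Finset.sum_add_distrib, Finset.sum_const, nsmul_eq_mul, Finset.mul_sum]
          congr 1
          · simp [N]; ring
          · rw [Finset.sum_congr rfl fun a _ => Finset.sum_comm (s := X) (t := T)
              (f := fun b μ => c μ * Z μ (y a b)), Finset.sum_comm]
      _ = N ^ 2 * c₀ := by
          rw [Finset.sum_congr rfl fun μ hμ => by rw [hdesign μ hμ, mul_zero]]
          simp
  -- Lower bound: each term is nonneg, diagonal terms equal 1
  have hterm : ∀ a b, 0 ≤ ∏ i, y a b i := fun a b =>
    Finset.prod_nonneg fun i _ => (hrange a b i).1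
  have hlow : N ≤ ∑ a ∈ X, ∑ b ∈ X, ∏ i, y a b i := by
    have : ∀ a ∈ X, (1 : ℝ) ≤ ∑ b ∈ X, ∏ i, y a b i := by
      intro a ha
      have h1 : (∏ i, y a a i) = 1 := by rw [hdiag a ha]; simp
      calc (1 : ℝ) = ∏ i, y a a i := h1.symm
        _ ≤ ∑ b ∈ X, ∏ i, y a b i :=
          Finset.single_le_sum (fun b _ => hterm a b) ha
    calc N = ∑ _a ∈ X, (1 : ℝ) := by simp [N]
      _ ≤ _ := Finset.sum_le_sum this
  have key : N ≤ N ^ 2 * c₀ := hS ▸ hlow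
  have h1 : 1 ≤ N * c₀ := by nlinarith
  rw [Finset.prod_const_one, div_le_iff₀ hc₀]
  linarith [mul_comm N c₀]
end
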